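/- Let A be an N×N strongly regular complex lower band matrix of order r. Then A admits a factorization A = L·R with L unit lower triangular and R upper triangular, and the inverse L⁻¹ admits the factorization L⁻¹ = L̃_{N−r+1}·L̃_{N−r}·L̃_{N−r−1}⋯L̃_1 (product in decreasing order of indices), where the embedded factors are built from matrices of the form L_k = [[1, 0_{1×r}],[−f_k, I_r]] ∈ ℂ^{(r+1)×(r+1)} for some columns f_k ∈ ℂ^{r×1} (k = 1,…,N−r) and a unit lower triangular matrix L_{N−r+1} ∈ ℂ^{r×r}. -/

import Mathlib

open Matrix

noncomputable section

/-- `A(i,j) = 0` whenever `i - j > r` (1-based; identical in 0-based `Fin` indexing). -/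
def IsLowerBand (N r : ℕ) (A : Matrix (Fin N) (Fin N) ℂ) : Prop :=
  ∀ i j : Fin N, (j : ℕ) + r < (i : ℕ) → A i j = 0

/-- `A(i,j) = 0` whenever `j - i > r`. -/
def IsUpperBand (N r : ℕ) (A : Matrix (Fin N) (Fin N) ℂ) : Prop :=
  ∀ i j : Fin N, (i : ℕ) + r < (j : ℕ) → A i j = 0

/-- `rank B(k:N, 1:k+r-1) ≤ r` for every `k = 1, …, N-r` (1-based). -/
def IsLowerGreen (N r : ℕ) (B : Matrix (Fin N) (Fin N) ℂ) : Prop :=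
  ∀ (k : ℕ) (hk1 : 1 ≤ k) (hk2 : k ≤ N - r),
    (B.submatrix
      (fun i : Fin (N - k + 1) => (⟨k - 1 + (i : ℕ), by have := i.isLt; omega⟩ : Fin N))
      (fun j : Fin (k + r - 1) => (⟨(j : ℕ), by have := j.isLt; omega⟩ : Fin N))).rank ≤ r

/-- `rank B(1:k+r-1, k:N) ≤ r` for every `k = 1, …, N-r` (1-based). -/
def IsUpperGreen (N r : ℕ) (B : Matrix (Fin N) (Fin N) ℂ) : Prop :=
  ∀ (k : ℕ) (hk1 : 1 ≤ k) (hk2 : k ≤ N - r),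
    (B.submatrix
      (fun i : Fin (k + r - 1) => (⟨(i : ℕ), by have := i.isLt; omega⟩ : Fin N))
      (fun j : Fin (N - k + 1) => (⟨k - 1 + (j : ℕ), by have := j.isLt; omega⟩ : Fin N))).rank ≤ r

/-- `a^>_{i,s} = a(i-1) a(i-2) ⋯ a(s+1)`, equal to `I_r` when `s ≥ i - 1`. -/
def aGT (r : ℕ) (a : ℕ → Matrix (Fin r) (Fin r) ℂ) (i s : ℕ) :
    Matrix (Fin r) (Fin r) ℂ :=
  (((List.range' (s + 1) (i - 1 - s)).reverse).map a).prod

/-- `p(i) ∈ ℂ^{1×r}` (i = 1,…,N−r), `pLast = p(N−r+1) ∈ ℂ^{r×r}`, `q(j) ∈ ℂ^{r×1}`,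
`a(k) ∈ ℂ^{r×r}` are lower Green generators of the `N×N` matrix `B`:
`B(i,1:r) = p(i)·a^>_{i,0}`, `B(i,r+s-1) = p(i)·a^>_{i,s-1}·q(s-1)` for `2 ≤ s ≤ i ≤ N-r`,
and the analogous identities for the last `r` rows `B(N-r+1:N, ·)` with `pLast`. -/
def IsLowerGreenGenerators (N r : ℕ) (hNr : r < N)
    (p : ℕ → Matrix (Fin 1) (Fin r) ℂ) (q : ℕ → Matrix (Fin r) (Fin 1) ℂ)
    (a : ℕ → Matrix (Fin r) (Fin r) ℂ) (pLast : Matrix (Fin r) (Fin r) ℂ)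
    (B : Matrix (Fin N) (Fin N) ℂ) : Prop :=
  (∀ (i : ℕ) (hi1 : 1 ≤ i) (hi2 : i ≤ N - r) (j : Fin r),
      B ⟨i - 1, by omega⟩ ⟨(j : ℕ), by have := j.isLt; omega⟩ = (p i * aGT r a i 0) 0 j)
  ∧ (∀ (i : ℕ) (hi1 : 1 ≤ i) (hi2 : i ≤ N - r) (s : ℕ) (hs1 : 2 ≤ s) (hs2 : s ≤ i),
      B ⟨i - 1, by omega⟩ ⟨r + s - 2, by omega⟩
        = (p i * aGT r a i (s - 1) * q (s - 1)) 0 0)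
  ∧ (∀ (t : Fin r) (j : Fin r),
      B ⟨N - r + (t : ℕ), by have := t.isLt; omega⟩ ⟨(j : ℕ), by have := j.isLt; omega⟩
        = (pLast * aGT r a (N - r + 1) 0) t j)
  ∧ (∀ (t : Fin r) (s : ℕ) (hs1 : 2 ≤ s) (hs2 : s ≤ N - r + 1),
      B ⟨N - r + (t : ℕ), by have := t.isLt; omega⟩ ⟨r + s - 2, by omega⟩
        = (pLast * aGT r a (N - r + 1) (s - 1) * q (s - 1)) t 0)

/-- The embedded factor `I_{k-1} ⊕ M ⊕ I_{N-k-r}` (1-based block position `k`),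
i.e. `M` occupies (1-based) rows and columns `k, …, k+r` of an `N×N` identity. -/
def embed (N r k : ℕ) (M : Matrix (Fin (r + 1)) (Fin (r + 1)) ℂ) :
    Matrix (Fin N) (Fin N) ℂ :=
  Matrix.of fun i j =>
    if h : k - 1 ≤ (i : ℕ) ∧ (i : ℕ) < k + r ∧ k - 1 ≤ (j : ℕ) ∧ (j : ℕ) < k + r then
      M ⟨(i : ℕ) - (k - 1), by omega⟩ ⟨(j : ℕ) - (k - 1), by omega⟩
    else if (i : ℕ) = (j : ℕ) then 1 else 0

/-- The embedded last factor `I_{N-r} ⊕ M`. -/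
def embedLast (N r : ℕ) (M : Matrix (Fin r) (Fin r) ℂ) : Matrix (Fin N) (Fin N) ℂ :=
  Matrix.of fun i j =>
    if h : N - r ≤ (i : ℕ) ∧ N - r ≤ (j : ℕ) then
      M ⟨(i : ℕ) - (N - r), by have := i.isLt; omega⟩
        ⟨(j : ℕ) - (N - r), by have := j.isLt; omega⟩
    else if (i : ℕ) = (j : ℕ) then 1 else 0

/-- `G̃_1 · G̃_2 ⋯ G̃_{N-r}` (increasing order of indices). -/
def prodAsc (N r : ℕ) (G : ℕ → Matrix (Fin (r + 1)) (Fin (r + 1)) ℂ) :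
    Matrix (Fin N) (Fin N) ℂ :=
  ((List.range' 1 (N - r)).map (fun k => embed N r k (G k))).prod

/-- `G̃_{N-r} · G̃_{N-r-1} ⋯ G̃_1` (decreasing order of indices). -/
def prodDesc (N r : ℕ) (G : ℕ → Matrix (Fin (r + 1)) (Fin (r + 1)) ℂ) :
    Matrix (Fin N) (Fin N) ℂ :=
  (((List.range' 1 (N - r)).reverse).map (fun k => embed N r k (G k))).prod

/-- The `1×r` block `p` of the partition `M = [[p, d], [a, q]]`. -/
def blkP (r : ℕ) (M : Matrix (Fin (r + 1)) (Fin (r + 1)) ℂ) : Matrix (Fin 1) (Fin r) ℂ :=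
  Matrix.of fun _ j => M 0 j.castSucc

/-- The `1×1` block `d` of the partition `M = [[p, d], [a, q]]`. -/
def blkD (r : ℕ) (M : Matrix (Fin (r + 1)) (Fin (r + 1)) ℂ) : ℂ := M 0 (Fin.last r)

/-- The `r×r` block `a` of the partition `M = [[p, d], [a, q]]`. -/
def blkA (r : ℕ) (M : Matrix (Fin (r + 1)) (Fin (r + 1)) ℂ) : Matrix (Fin r) (Fin r) ℂ :=
  Matrix.of fun i j => M i.succ j.castSucc

/-- The `r×1` block `q` of the partition `M = [[p, d], [a, q]]`. -/
def blkQ (r : ℕ) (M : Matrix (Fin (r + 1)) (Fin (r + 1)) ℂ) : Matrix (Fin r) (Fin 1) ℂ :=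
  Matrix.of fun i _ => M i.succ (Fin.last r)

/-- Assemble the `(r+1)×(r+1)` matrix `[[p, d], [a, q]]` from its blocks. -/
def mkBlk (r : ℕ) (p : Matrix (Fin 1) (Fin r) ℂ) (d : ℂ)
    (a : Matrix (Fin r) (Fin r) ℂ) (q : Matrix (Fin r) (Fin 1) ℂ) :
    Matrix (Fin (r + 1)) (Fin (r + 1)) ℂ :=
  Matrix.of fun i j =>
    if hi : (i : ℕ) = 0 then
      if hj : (j : ℕ) < r then p 0 ⟨(j : ℕ), hj⟩ else d
    else
      if hj : (j : ℕ) < r then a ⟨(i : ℕ) - 1, by have := i.isLt; omega⟩ ⟨(j : ℕ), hj⟩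
      else q ⟨(i : ℕ) - 1, by have := i.isLt; omega⟩ 0

/-- The elementary Gauss factor `[[1, 0_{1×r}], [-f, I_r]]`. -/
def elemL (r : ℕ) (f : Matrix (Fin r) (Fin 1) ℂ) :
    Matrix (Fin (r + 1)) (Fin (r + 1)) ℂ :=
  Matrix.of fun i j =>
    if hi : (i : ℕ) = 0 then (if (j : ℕ) = 0 then 1 else 0)
    else if hj : (j : ℕ) = 0 then -f ⟨(i : ℕ) - 1, by have := i.isLt; omega⟩ 0
    else if (i : ℕ) = (j : ℕ) then 1 else 0

/-- The elementary factor `[[I_r, 0_{r×1}], [-g, 1]]`. -/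
def elemLrow (r : ℕ) (g : Matrix (Fin 1) (Fin r) ℂ) :
    Matrix (Fin (r + 1)) (Fin (r + 1)) ℂ :=
  Matrix.of fun i j =>
    if hi : (i : ℕ) < r then
      (if hj : (j : ℕ) < r then (if (i : ℕ) = (j : ℕ) then 1 else 0) else 0)
    else if hj : (j : ℕ) < r then -g 0 ⟨(j : ℕ), hj⟩ else 1

/-- All leading principal minors are nonzero. -/
def StronglyRegular (N : ℕ) (A : Matrix (Fin N) (Fin N) ℂ) : Prop :=
  ∀ (k : ℕ) (hk : k ≤ N), 1 ≤ k →
    (A.submatrix (Fin.castLE hk) (Fin.castLE hk)).det ≠ 0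
/-! ### Auxiliary machinery for the proof -/

namespace LUAux

open Finset

/-- The Gauss multiplier column: `v i = B i c / B c c` for `c < i ≤ c + r`, else `0`. -/
def vcol (N r : ℕ) (B : Matrix (Fin N) (Fin N) ℂ) (c : ℕ) (i : Fin N) : ℂ :=
  if h : c < (i : ℕ) ∧ (i : ℕ) ≤ c + r then
    B i ⟨c, h.1.trans i.isLt⟩ / B ⟨c, h.1.trans i.isLt⟩ ⟨c, h.1.trans i.isLt⟩
  else 0

/-- One step of Gaussian elimination with pivot column `c` (0-based). -/
def elimStep (N r : ℕ) (B : Matrix (Fin N) (Fin N) ℂ) (c : ℕ) :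
    Matrix (Fin N) (Fin N) ℂ :=
  Matrix.of fun i j =>
    if h : c < N then B i j - vcol N r B c i * B ⟨c, h⟩ j else B i j

/-- Iterated elimination. -/
def Astep (N r : ℕ) (A : Matrix (Fin N) (Fin N) ℂ) : ℕ → Matrix (Fin N) (Fin N) ℂ
  | 0 => A
  | (c + 1) => elimStep N r (Astep N r A c) c

/-- The column `f` used at (0-based) step `c`. -/
def fOf (N r : ℕ) (B : Matrix (Fin N) (Fin N) ℂ) (c : ℕ) : Matrix (Fin r) (Fin 1) ℂ :=
  Matrix.of fun t _ =>
    if h : c + 1 + (t : ℕ) < N then vcol N r B c ⟨c + 1 + (t : ℕ), h⟩ else 0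

/-- The `r×r` elementary factor used at (0-based) step `c ≥ N - r`. -/
def WOf (N r : ℕ) (B : Matrix (Fin N) (Fin N) ℂ) (c : ℕ) : Matrix (Fin r) (Fin r) ℂ :=
  Matrix.of fun i j =>
    if (i : ℕ) = (j : ℕ) then 1
    else if h : N - r + (j : ℕ) = c ∧ N - r + (i : ℕ) < N then
      -vcol N r B c ⟨N - r + (i : ℕ), h.2⟩
    else 0

/-- Unit lower triangular. -/
def ULT {n : ℕ} (M : Matrix (Fin n) (Fin n) ℂ) : Prop :=
  (∀ i j : Fin n, (i : ℕ) < (j : ℕ) → M i j = 0) ∧ ∀ i : Fin n, M i i = 1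

theorem ULT.one {n : ℕ} : ULT (1 : Matrix (Fin n) (Fin n) ℂ) := by
  constructor
  · intro i j hij
    simp [Matrix.one_apply, Fin.ext_iff, Nat.ne_of_lt hij]
  · intro i; simp

theorem ULT.mul {n : ℕ} {X Y : Matrix (Fin n) (Fin n) ℂ} (hX : ULT X) (hY : ULT Y) :
    ULT (X * Y) := by
  constructor
  · intro i j hij
    rw [Matrix.mul_apply]
    refine Finset.sum_eq_zero fun k _ => ?_
    rcases lt_or_ge (k : ℕ) (j : ℕ) with h | h
    · rw [hY.1 k j h, mul_zero]
    · rw [hX.1 i k (lt_of_lt_of_le hij h), zero_mul]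
  · intro i
    rw [Matrix.mul_apply, Finset.sum_eq_single i]
    · rw [hX.2, hY.2, one_mul]
    · intro k _ hk
      rcases lt_or_ge (k : ℕ) (i : ℕ) with h | h
      · rw [hY.1 k i h, mul_zero]
      · have : (i : ℕ) < (k : ℕ) := lt_of_le_of_ne h (fun hc => hk (Fin.ext hc.symm))
        rw [hX.1 i k this, zero_mul]
    · intro h; exact absurd (Finset.mem_univ i) h

theorem ULT.list_prod {n : ℕ} {l : List (Matrix (Fin n) (Fin n) ℂ)}
    (h : ∀ X ∈ l, ULT X) : ULT l.prod := by
  induction l with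
  | nil => exact ULT.one
  | cons a t ih =>
    rw [List.prod_cons]
    exact ULT.mul (h a List.mem_cons_self) (ih fun X hX => h X (List.mem_cons_of_mem a hX))

theorem ULT.det_one {n : ℕ} {M : Matrix (Fin n) (Fin n) ℂ} (h : ULT M) : M.det = 1 := by
  rw [Matrix.det_of_lowerTriangular M (fun i j hij => h.1 i j hij)]
  simp [h.2]

theorem ULT.inv {n : ℕ} {M : Matrix (Fin n) (Fin n) ℂ} (h : ULT M) : ULT M⁻¹ := by
  have hbt : M.BlockTriangular OrderDual.toDual := fun i j hij => h.1 i j hij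
  have hdet : IsUnit M.det := by rw [h.det_one]; exact isUnit_one
  have : Invertible M := M.invertibleOfIsUnitDet hdet
  have hinvbt := Matrix.blockTriangular_inv_of_blockTriangular hbt
  constructor
  · intro i j hij; exact hinvbt (show OrderDual.toDual j < OrderDual.toDual i from hij)
  · intro i
    have h1 : (M⁻¹ * M) i i = 1 := by rw [Matrix.nonsing_inv_mul M hdet, Matrix.one_apply_eq]
    rw [Matrix.mul_apply, Finset.sum_eq_single i] at h1
    · rw [h.2, mul_one] at h1; exact h1
    · intro k _ hk
      rcases lt_or_ge (k : ℕ) (i : ℕ) with hlt | hle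
      · rw [h.1 k i hlt, mul_zero]
      · have : (i : ℕ) < (k : ℕ) := lt_of_le_of_ne hle (fun hc => hk (Fin.ext hc.symm))
        rw [hinvbt (show OrderDual.toDual k < OrderDual.toDual i from this), zero_mul]
    · intro hi; exact absurd (Finset.mem_univ i) hi

theorem elimStep_apply {N r : ℕ} (B : Matrix (Fin N) (Fin N) ℂ) {c : ℕ} (hc : c < N)
    (i j : Fin N) :
    elimStep N r B c i j = B i j - vcol N r B c i * B ⟨c, hc⟩ j := by
  simp [elimStep, hc]

theorem vcol_eq_zero {N r : ℕ} (B : Matrix (Fin N) (Fin N) ℂ) {c : ℕ} {i : Fin N}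
    (h : ¬(c < (i : ℕ) ∧ (i : ℕ) ≤ c + r)) : vcol N r B c i = 0 := by
  simp [vcol, h]

end LUAux
namespace LUAux

open Finset

theorem embed_elemL_ult {N r k : ℕ} (f : Matrix (Fin r) (Fin 1) ℂ) :
    ULT (embed N r k (elemL r f)) := by
  constructor
  · intro i j hij
    simp only [embed, elemL, Matrix.of_apply]
    split_ifs <;> first | rfl | (exfalso; omega)
  · intro i
    simp only [embed, elemL, Matrix.of_apply]
    split_ifs <;> first | rfl | (exfalso; omega)

theorem embedLast_ult {N r : ℕ} {M : Matrix (Fin r) (Fin r) ℂ} (hM : ULT M) :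
    ULT (embedLast N r M) := by
  constructor
  · intro i j hij
    simp only [embedLast, Matrix.of_apply]
    split_ifs with h h2
    · exact hM.1 _ _ (show (i : ℕ) - (N - r) < (j : ℕ) - (N - r) by omega)
    · exfalso; omega
    · rfl
  · intro i
    simp only [embedLast, Matrix.of_apply]
    split_ifs with h
    · exact hM.2 _
    · rfl

theorem WOf_ult {N r : ℕ} (B : Matrix (Fin N) (Fin N) ℂ) (c : ℕ) : ULT (WOf N r B c) := by
  constructor
  · intro i j hij
    simp only [WOf, Matrix.of_apply]
    rw [if_neg (Nat.ne_of_lt hij)]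
    split_ifs with h
    · rw [vcol_eq_zero, neg_zero]
      simp only [not_and]
      intro hlt
      omega
    · rfl
  · intro i
    simp [WOf]

/-- Summation over the last `r` indices of `Fin N`. -/
theorem sum_last {N r : ℕ} (hrN : r ≤ N) (g : Fin N → ℂ)
    (h0 : ∀ l : Fin N, (l : ℕ) < N - r → g l = 0) :
    ∑ l, g l = ∑ t : Fin r, g ⟨N - r + (t : ℕ), by omega⟩ := by
  set g' : ℕ → ℂ := fun n => if h : n < N then g ⟨n, h⟩ else 0 with hg'
  have h1 : ∑ l : Fin N, g l = ∑ n ∈ Finset.range N, g' n := by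
    rw [← Fin.sum_univ_eq_sum_range]
    refine Finset.sum_congr rfl fun l _ => ?_
    simp [hg', l.isLt]
  have h2 : ∑ t : Fin r, g ⟨N - r + (t : ℕ), by omega⟩ = ∑ t ∈ Finset.range r, g' (N - r + t) := by
    rw [← Fin.sum_univ_eq_sum_range (fun t => g' (N - r + t))]
    refine Finset.sum_congr rfl fun t _ => ?_
    have ht : N - r + (t : ℕ) < N := by omega
    simp [hg', ht]
  have hsplit : ∑ n ∈ Finset.range N, g' n
      = (∑ n ∈ Finset.range (N - r), g' n) + ∑ n ∈ Finset.Ico (N - r) N, g' n := by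
    rw [Finset.range_eq_Ico,
      ← Finset.sum_Ico_consecutive _ (Nat.zero_le (N - r)) (show N - r ≤ N by omega),
      ← Finset.range_eq_Ico]
  have hIco : ∑ n ∈ Finset.Ico (N - r) N, g' n = ∑ t ∈ Finset.range r, g' (N - r + t) := by
    have hNr' : N - (N - r) = r := by omega
    rw [Finset.sum_Ico_eq_sum_range, hNr']
  have hz : ∑ n ∈ Finset.range (N - r), g' n = 0 := by
    refine Finset.sum_eq_zero fun n hn => ?_
    rw [Finset.mem_range] at hn
    have hnN : n < N := by omega
    simp only [hg', dif_pos hnN]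
    exact h0 _ hn
  rw [h1, h2, hsplit, hIco, hz, zero_add]

theorem embedLast_one {N r : ℕ} : embedLast N r (1 : Matrix (Fin r) (Fin r) ℂ) = 1 := by
  ext i j
  simp only [embedLast, Matrix.of_apply, Matrix.one_apply]
  split_ifs with h h1 h2 h2 h3 <;> first
    | rfl
    | (exfalso; simp only [Fin.ext_iff] at *; omega)

theorem embedLast_mul {N r : ℕ} (hrN : r ≤ N) (X Y : Matrix (Fin r) (Fin r) ℂ) :
    embedLast N r (X * Y) = embedLast N r X * embedLast N r Y := by
  ext i j
  rw [Matrix.mul_apply]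
  by_cases hi : N - r ≤ (i : ℕ)
  · by_cases hj : N - r ≤ (j : ℕ)
    · have hL : embedLast N r (X * Y) i j
          = ∑ t : Fin r, X ⟨(i : ℕ) - (N - r), by omega⟩ t * Y t ⟨(j : ℕ) - (N - r), by omega⟩ := by
        simp only [embedLast, Matrix.of_apply, dif_pos (And.intro hi hj), Matrix.mul_apply]
      have h0 : ∀ l : Fin N, (l : ℕ) < N - r →
          embedLast N r X i l * embedLast N r Y l j = 0 := by
        intro l hl
        have hx : embedLast N r X i l = 0 := by
          simp only [embedLast, Matrix.of_apply]
          rw [dif_neg (by omega), if_neg (by omega)]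
        rw [hx, zero_mul]
      rw [hL, sum_last hrN _ h0]
      refine Finset.sum_congr rfl fun t _ => ?_
      have h1 : N - r ≤ N - r + (t : ℕ) := Nat.le_add_right _ _
      show X _ _ * Y _ _ = embedLast N r X i ⟨N - r + (t : ℕ), _⟩
        * embedLast N r Y ⟨N - r + (t : ℕ), _⟩ j
      simp only [embedLast, Matrix.of_apply, dif_pos (And.intro hi h1),
        dif_pos (And.intro h1 hj)]
      congr 2 <;> simp only [Fin.ext_iff] <;> omega
    · have hL : embedLast N r (X * Y) i j = 0 := by
        simp only [embedLast, Matrix.of_apply]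
        rw [dif_neg (by omega), if_neg (by omega)]
      rw [hL]
      refine (Finset.sum_eq_zero fun l _ => ?_).symm
      by_cases hl : N - r ≤ (l : ℕ)
      · have hy : embedLast N r Y l j = 0 := by
          simp only [embedLast, Matrix.of_apply]
          rw [dif_neg (by omega), if_neg (by omega)]
        rw [hy, mul_zero]
      · have hx : embedLast N r X i l = 0 := by
          simp only [embedLast, Matrix.of_apply]
          rw [dif_neg (by omega), if_neg (by omega)]
        rw [hx, zero_mul]
  · have hL : embedLast N r (X * Y) i j = if (i : ℕ) = (j : ℕ) then 1 else 0 := by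
      simp only [embedLast, Matrix.of_apply]
      rw [dif_neg (by omega)]
    rw [hL, Finset.sum_eq_single i]
    · have hX : embedLast N r X i i = 1 := by
        simp only [embedLast, Matrix.of_apply]
        rw [dif_neg (show ¬(N - r ≤ (i : ℕ) ∧ N - r ≤ (i : ℕ)) by omega)]
        simp
      rw [hX, one_mul]
      simp only [embedLast, Matrix.of_apply]
      rw [dif_neg (by omega)]
    · intro l _ hl
      have hx : embedLast N r X i l = 0 := by
        simp only [embedLast, Matrix.of_apply]
        rw [dif_neg (by omega), if_neg (fun hc => hl (Fin.ext hc.symm))]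
      rw [hx, zero_mul]
    · intro hmem; exact absurd (Finset.mem_univ i) hmem

end LUAux
namespace LUAux

open Finset

theorem embed_mul_eq_elimStep {N r c : ℕ} (hc : c + r < N) (hr : 0 < r)
    (B : Matrix (Fin N) (Fin N) ℂ) :
    embed N r (c + 1) (elemL r (fOf N r B c)) * B = elimStep N r B c := by
  have hcN : c < N := by omega
  ext i j
  rw [Matrix.mul_apply, elimStep_apply B hcN]
  have hwin : ∀ l : Fin N, (c + 1 - 1 ≤ (i : ℕ) ∧ (i : ℕ) < c + 1 + r
      ∧ c + 1 - 1 ≤ (l : ℕ) ∧ (l : ℕ) < c + 1 + r) ↔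
      (c ≤ (i : ℕ) ∧ (i : ℕ) < c + 1 + r ∧ c ≤ (l : ℕ) ∧ (l : ℕ) < c + 1 + r) := by
    intro l; constructor <;> (intro h; exact ⟨by omega, by omega, by omega, by omega⟩)
  by_cases hiw : c ≤ (i : ℕ) ∧ (i : ℕ) < c + 1 + r
  · by_cases hic : (i : ℕ) = c
    · -- pivot row: unchanged
      have hv : vcol N r B c i = 0 := vcol_eq_zero B (by omega)
      rw [hv, zero_mul, sub_zero, Finset.sum_eq_single i]
      · have : embed N r (c + 1) (elemL r (fOf N r B c)) i i = 1 := by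
          simp only [embed, elemL, Matrix.of_apply]
          rw [dif_pos (by omega : c + 1 - 1 ≤ (i : ℕ) ∧ (i : ℕ) < c + 1 + r
            ∧ c + 1 - 1 ≤ (i : ℕ) ∧ (i : ℕ) < c + 1 + r)]
          rw [dif_pos (show (i : ℕ) - (c + 1 - 1) = 0 by omega)]
          rw [if_pos (show (i : ℕ) - (c + 1 - 1) = 0 by omega)]
        rw [this, one_mul]
      · intro l _ hl
        have : embed N r (c + 1) (elemL r (fOf N r B c)) i l = 0 := by
          simp only [embed, elemL, Matrix.of_apply]
          by_cases hlw : c + 1 - 1 ≤ (l : ℕ) ∧ (l : ℕ) < c + 1 + r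
          · rw [dif_pos (by omega : c + 1 - 1 ≤ (i : ℕ) ∧ (i : ℕ) < c + 1 + r
              ∧ c + 1 - 1 ≤ (l : ℕ) ∧ (l : ℕ) < c + 1 + r)]
            rw [dif_pos (show (i : ℕ) - (c + 1 - 1) = 0 by omega)]
            rw [if_neg (show ¬(l : ℕ) - (c + 1 - 1) = 0 by
              intro h0
              exact hl (Fin.ext (by omega)))]
          · rw [dif_neg (by omega)]
            rw [if_neg (fun h0 => hl (Fin.ext h0.symm))]
        rw [this, zero_mul]
      · intro hmem; exact absurd (Finset.mem_univ i) hmem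
    · -- modified row: c < i ≤ c + r
      have hci : c < (i : ℕ) := by omega
      rw [Finset.sum_eq_add_of_mem i ⟨c, hcN⟩ (Finset.mem_univ _) (Finset.mem_univ _)
        (by simp [Fin.ext_iff]; omega)]
      · have h1 : embed N r (c + 1) (elemL r (fOf N r B c)) i i = 1 :=
          (embed_elemL_ult (fOf N r B c)).2 i
        have h2 : embed N r (c + 1) (elemL r (fOf N r B c)) i ⟨c, hcN⟩
            = -vcol N r B c i := by
          simp only [embed, elemL, Matrix.of_apply]
          rw [dif_pos (by omega : c + 1 - 1 ≤ (i : ℕ) ∧ (i : ℕ) < c + 1 + r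
            ∧ c + 1 - 1 ≤ c ∧ c < c + 1 + r)]
          rw [dif_neg (show ¬(i : ℕ) - (c + 1 - 1) = 0 by omega)]
          rw [dif_pos (show (c : ℕ) - (c + 1 - 1) = 0 by omega)]
          simp only [fOf, Matrix.of_apply]
          have hlt : c + 1 + ((i : ℕ) - (c + 1 - 1) - 1) < N := by omega
          rw [dif_pos hlt]
          congr 1
          apply congrArg
          exact Fin.ext (by simp; omega)
        rw [h1, h2, one_mul]
        ring
      · intro l _ hl
        have : embed N r (c + 1) (elemL r (fOf N r B c)) i l = 0 := by
          simp only [embed, elemL, Matrix.of_apply]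
          by_cases hlw : c + 1 - 1 ≤ (l : ℕ) ∧ (l : ℕ) < c + 1 + r
          · rw [dif_pos (by omega : c + 1 - 1 ≤ (i : ℕ) ∧ (i : ℕ) < c + 1 + r
              ∧ c + 1 - 1 ≤ (l : ℕ) ∧ (l : ℕ) < c + 1 + r)]
            rw [dif_neg (show ¬(i : ℕ) - (c + 1 - 1) = 0 by omega)]
            rw [dif_neg (show ¬(l : ℕ) - (c + 1 - 1) = 0 by
              intro h0
              exact hl.2 (Fin.ext (by simp; omega)))]
            rw [if_neg (show ¬(i : ℕ) - (c + 1 - 1) = (l : ℕ) - (c + 1 - 1) by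
              intro h0
              exact hl.1 (Fin.ext (by omega)))]
          · rw [dif_neg (by omega)]
            rw [if_neg (fun h0 => hl.1 (Fin.ext h0.symm))]
        rw [this, zero_mul]
  · -- row outside window: unchanged
    have hv : vcol N r B c i = 0 := vcol_eq_zero B (by omega)
    rw [hv, zero_mul, sub_zero, Finset.sum_eq_single i]
    · rw [(embed_elemL_ult (fOf N r B c)).2 i, one_mul]
    · intro l _ hl
      have : embed N r (c + 1) (elemL r (fOf N r B c)) i l = 0 := by
        simp only [embed, Matrix.of_apply]
        rw [dif_neg (by omega), if_neg (fun h0 => hl (Fin.ext h0.symm))]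
      rw [this, zero_mul]
    · intro hmem; exact absurd (Finset.mem_univ i) hmem

theorem embedLast_mul_eq_elimStep {N r c : ℕ} (hc1 : N - r ≤ c) (hc2 : c < N) (hrN : r < N)
    (B : Matrix (Fin N) (Fin N) ℂ) :
    embedLast N r (WOf N r B c) * B = elimStep N r B c := by
  ext i j
  rw [Matrix.mul_apply, elimStep_apply B hc2]
  by_cases hi : N - r ≤ (i : ℕ)
  · by_cases hic : (i : ℕ) = c
    · have hv : vcol N r B c i = 0 := vcol_eq_zero B (by omega)
      rw [hv, zero_mul, sub_zero, Finset.sum_eq_single i]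
      · rw [(embedLast_ult (WOf_ult B c)).2 i, one_mul]
      · intro l _ hl
        have : embedLast N r (WOf N r B c) i l = 0 := by
          simp only [embedLast, WOf, Matrix.of_apply]
          by_cases hlr : N - r ≤ (l : ℕ)
          · rw [dif_pos (And.intro hi hlr)]
            rw [if_neg (show ¬(i : ℕ) - (N - r) = (l : ℕ) - (N - r) by
              intro h0; exact hl (Fin.ext (by omega)))]
            rw [dif_neg (show ¬(N - r + ((l : ℕ) - (N - r)) = c
              ∧ N - r + ((i : ℕ) - (N - r)) < N) by
              simp only [not_and]
              intro h0
              exfalso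
              exact hl (Fin.ext (by omega)))]
          · rw [dif_neg (by omega), if_neg (fun h0 => hl (Fin.ext h0.symm))]
        rw [this, zero_mul]
      · intro hmem; exact absurd (Finset.mem_univ i) hmem
    · rw [Finset.sum_eq_add_of_mem i ⟨c, hc2⟩ (Finset.mem_univ _) (Finset.mem_univ _)
        (by simp [Fin.ext_iff]; omega)]
      · have h1 : embedLast N r (WOf N r B c) i i = 1 :=
          (embedLast_ult (WOf_ult B c)).2 i
        have h2 : embedLast N r (WOf N r B c) i ⟨c, hc2⟩ = -vcol N r B c i := by
          simp only [embedLast, WOf, Matrix.of_apply]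
          rw [dif_pos (And.intro hi hc1)]
          rw [if_neg (show ¬(i : ℕ) - (N - r) = c - (N - r) by omega)]
          rw [dif_pos (show N - r + (c - (N - r)) = c ∧ N - r + ((i : ℕ) - (N - r)) < N by
            constructor <;> omega)]
          congr 1
          apply congrArg
          exact Fin.ext (by simp; omega)
        rw [h1, h2, one_mul]
        ring
      · intro l _ hl
        have : embedLast N r (WOf N r B c) i l = 0 := by
          simp only [embedLast, WOf, Matrix.of_apply]
          by_cases hlr : N - r ≤ (l : ℕ)
          · rw [dif_pos (And.intro hi hlr)]
            rw [if_neg (show ¬(i : ℕ) - (N - r) = (l : ℕ) - (N - r) by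
              intro h0; exact hl.1 (Fin.ext (by omega)))]
            rw [dif_neg (show ¬(N - r + ((l : ℕ) - (N - r)) = c
              ∧ N - r + ((i : ℕ) - (N - r)) < N) by
              simp only [not_and]
              intro h0
              exfalso
              exact hl.2 (Fin.ext (by simp; omega)))]
          · rw [dif_neg (by omega), if_neg (fun h0 => hl.1 (Fin.ext h0.symm))]
        rw [this, zero_mul]
  · have hv : vcol N r B c i = 0 := vcol_eq_zero B (by omega)
    rw [hv, zero_mul, sub_zero, Finset.sum_eq_single i]
    · rw [(embedLast_ult (WOf_ult B c)).2 i, one_mul]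
    · intro l _ hl
      have : embedLast N r (WOf N r B c) i l = 0 := by
        simp only [embedLast, Matrix.of_apply]
        rw [dif_neg (by omega), if_neg (fun h0 => hl (Fin.ext h0.symm))]
      rw [this, zero_mul]
    · intro hmem; exact absurd (Finset.mem_univ i) hmem

end LUAux
namespace LUAux

open Finset

theorem desc_prod_mul {N r : ℕ} (hr : 0 < r) (hNr : r < N) (A : Matrix (Fin N) (Fin N) ℂ)
    (m : ℕ) (hm : m ≤ N - r) :
    (((List.range' 1 m).reverse).map
      (fun k => embed N r k (elemL r (fOf N r (Astep N r A (k - 1)) (k - 1))))).prod * A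
      = Astep N r A m := by
  induction m with
  | zero => simp [Astep]
  | succ m ih =>
    have hm' : m ≤ N - r := by omega
    have hcat : (List.range' 1 (m + 1)).reverse = (m + 1) :: (List.range' 1 m).reverse := by
      rw [List.range'_concat]
      simp [Nat.add_comm]
    rw [hcat, List.map_cons, List.prod_cons, mul_assoc, ih hm']
    rw [show Astep N r A (m + 1) = elimStep N r (Astep N r A m) m from rfl]
    rw [show m + 1 - 1 = m from rfl]
    exact embed_mul_eq_elimStep (by omega) hr (Astep N r A m)

theorem last_prod_mul {N r : ℕ} (hr : 0 < r) (hNr : r < N) (A : Matrix (Fin N) (Fin N) ℂ)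
    (m : ℕ) (hm : m ≤ r - 1) :
    embedLast N r ((((List.range' (N - r) m).reverse).map
      (fun c => WOf N r (Astep N r A c) c)).prod) * Astep N r A (N - r)
      = Astep N r A (N - r + m) := by
  induction m with
  | zero => simp [embedLast_one]
  | succ m ih =>
    have hm' : m ≤ r - 1 := by omega
    have hcat : (List.range' (N - r) (m + 1)).reverse
        = (N - r + m) :: (List.range' (N - r) m).reverse := by
      rw [List.range'_concat]
      simp
    rw [hcat, List.map_cons, List.prod_cons, embedLast_mul (le_of_lt hNr), mul_assoc, ih hm']
    rw [show Astep N r A (N - r + (m + 1))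
      = elimStep N r (Astep N r A (N - r + m)) (N - r + m) from rfl]
    exact embedLast_mul_eq_elimStep (by omega) (by omega) hNr _

theorem invariants {N r : ℕ} (hr : 0 < r) (hNr : r < N) (A : Matrix (Fin N) (Fin N) ℂ)
    (hsr : StronglyRegular N A) (hband : IsLowerBand N r A) :
    ∀ c, c ≤ N - 1 →
      (∀ i j : Fin N, (j : ℕ) < (i : ℕ) → (j : ℕ) < c → Astep N r A c i j = 0)
      ∧ (∀ i j : Fin N, (j : ℕ) + r < (i : ℕ) → Astep N r A c i j = 0)
      ∧ (∀ m, ∀ hm : m ≤ N,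
          ((Astep N r A c).submatrix (Fin.castLE hm) (Fin.castLE hm)).det
            = (A.submatrix (Fin.castLE hm) (Fin.castLE hm)).det) := by
  intro c
  induction c with
  | zero =>
    exact fun _ => ⟨fun i j _ h => absurd h (Nat.not_lt_zero _), hband, fun m hm => rfl⟩
  | succ c ih =>
    intro hc1
    obtain ⟨IH1, IH2, IH3⟩ := ih (by omega)
    have hcN : c < N := by omega
    set B := Astep N r A c with hB
    have hm1 : c + 1 ≤ N := by omega
    have hSut : (B.submatrix (Fin.castLE hm1) (Fin.castLE hm1)).BlockTriangular id := by
      intro a b hab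
      have hab' : (b : ℕ) < (a : ℕ) := hab
      have ha := a.isLt
      exact IH1 (Fin.castLE hm1 a) (Fin.castLE hm1 b) hab' (show (b : ℕ) < c by omega)
    have hdetS : (B.submatrix (Fin.castLE hm1) (Fin.castLE hm1)).det ≠ 0 := by
      rw [IH3 (c + 1) hm1]
      exact hsr (c + 1) hm1 (by omega)
    have hpiv : B ⟨c, hcN⟩ ⟨c, hcN⟩ ≠ 0 := by
      rw [Matrix.det_of_upperTriangular hSut] at hdetS
      have := Finset.prod_ne_zero_iff.mp hdetS ⟨c, Nat.lt_succ_self c⟩ (Finset.mem_univ _)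
      exact this
    refine ⟨?_, ?_, ?_⟩
    · -- columns < c+1 are cleared below the diagonal
      intro i j hji hjc
      rw [show Astep N r A (c + 1) = elimStep N r B c from rfl, elimStep_apply B hcN]
      rcases Nat.lt_or_ge (j : ℕ) c with hjc' | hjc'
      · rw [IH1 i j hji hjc', IH1 ⟨c, hcN⟩ j hjc' hjc', mul_zero, sub_zero]
      · have hjc2 : (j : ℕ) = c := by omega
        have hj' : j = ⟨c, hcN⟩ := Fin.ext hjc2
        rcases Nat.lt_or_ge (c + r) (i : ℕ) with hir | hir
        · rw [hj', IH2 i ⟨c, hcN⟩ (show c + r < (i : ℕ) from hir), vcol_eq_zero B (by omega),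
            zero_mul, sub_zero]
        · have hvi : vcol N r B c i = B i ⟨c, hcN⟩ / B ⟨c, hcN⟩ ⟨c, hcN⟩ := by
            simp only [vcol]
            rw [dif_pos (show c < (i : ℕ) ∧ (i : ℕ) ≤ c + r by omega)]
          rw [hj', hvi, div_mul_cancel₀ _ hpiv, sub_self]
    · -- band structure is preserved
      intro i j hij
      rw [show Astep N r A (c + 1) = elimStep N r B c from rfl, elimStep_apply B hcN,
        IH2 i j hij]
      by_cases hv : c < (i : ℕ) ∧ (i : ℕ) ≤ c + r
      · have hjc : (j : ℕ) < c := by omega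
        rw [IH1 ⟨c, hcN⟩ j hjc hjc, mul_zero, sub_zero]
      · rw [vcol_eq_zero B hv, zero_mul, sub_zero]
    · -- leading principal minors are preserved
      intro m hm
      have step_det : ((elimStep N r B c).submatrix (Fin.castLE hm) (Fin.castLE hm)).det
          = (B.submatrix (Fin.castLE hm) (Fin.castLE hm)).det := by
        rcases le_or_gt m c with hmc | hmc
        · congr 1
          ext a b
          have ha := a.isLt
          rw [Matrix.submatrix_apply, Matrix.submatrix_apply, elimStep_apply B hcN,
            vcol_eq_zero B (by simp only [Fin.coe_castLE]; omega), zero_mul, sub_zero]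
        · set Lm : Matrix (Fin m) (Fin m) ℂ := Matrix.of fun a b =>
            if a = b then 1
            else if (b : ℕ) = c then -vcol N r B c (Fin.castLE hm a) else 0 with hLm
          have hcast : Fin.castLE hm (⟨c, hmc⟩ : Fin m) = (⟨c, hcN⟩ : Fin N) := Fin.ext rfl
          have key : (elimStep N r B c).submatrix (Fin.castLE hm) (Fin.castLE hm)
              = Lm * B.submatrix (Fin.castLE hm) (Fin.castLE hm) := by
            ext a b
            rw [Matrix.submatrix_apply, elimStep_apply B hcN, Matrix.mul_apply]
            by_cases hac : (a : ℕ) = c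
            · rw [Finset.sum_eq_single a]
              · have h1 : Lm a a = 1 := by simp [hLm]
                rw [h1, one_mul, Matrix.submatrix_apply,
                  vcol_eq_zero B (by simp only [Fin.coe_castLE]; omega), zero_mul, sub_zero]
              · intro l _ hl
                have h0 : Lm a l = 0 := by
                  simp only [hLm, Matrix.of_apply]
                  rw [if_neg (fun h => hl (h.symm)), if_neg (fun h => hl (Fin.ext (by omega)))]
                rw [h0, zero_mul]
              · exact fun hmem => absurd (Finset.mem_univ a) hmem
            · rw [Finset.sum_eq_add_of_mem a ⟨c, hmc⟩ (Finset.mem_univ _) (Finset.mem_univ _)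
                (by simp [Fin.ext_iff]; omega)]
              · have h1 : Lm a a = 1 := by simp [hLm]
                have h2 : Lm a ⟨c, hmc⟩ = -vcol N r B c (Fin.castLE hm a) := by
                  simp only [hLm, Matrix.of_apply]
                  rw [if_neg (fun h => hac (by rw [h]))]
                  simp
                rw [h1, h2, one_mul, Matrix.submatrix_apply, Matrix.submatrix_apply, hcast]
                ring
              · intro l _ hl
                have h0 : Lm a l = 0 := by
                  simp only [hLm, Matrix.of_apply]
                  rw [if_neg (fun h => hl.1 (h.symm)),
                    if_neg (fun h => hl.2 (Fin.ext (by simp; omega)))]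
                rw [h0, zero_mul]
          rw [key, Matrix.det_mul]
          have hdetL : Lm.det = 1 := by
            have hlt : Lm.BlockTriangular OrderDual.toDual := by
              intro a b hab
              have hab' : (a : ℕ) < (b : ℕ) := hab
              simp only [hLm, Matrix.of_apply]
              rw [if_neg (fun h => by rw [h] at hab'; omega)]
              split_ifs with h1
              · rw [vcol_eq_zero B (by simp only [Fin.coe_castLE]; omega), neg_zero]
              · rfl
            rw [Matrix.det_of_lowerTriangular Lm hlt]
            refine Finset.prod_eq_one fun a _ => by simp [hLm]
          rw [hdetL, one_mul]
      rw [show Astep N r A (c + 1) = elimStep N r B c from rfl, step_det, IH3 m hm]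

end LUAux

/-- Every strongly regular lower band matrix `A` of order `r` admits a factorization
`A = L·R` with `L` unit lower triangular and `R` upper triangular, where
`L⁻¹ = L̃_{N-r+1}·L̃_{N-r}⋯L̃_1`, the embedded factors being built from elementary matrices
`L_k = [[1, 0], [-f_k, I_r]]` and a unit lower triangular `r×r` matrix `L_{N-r+1}`. -/
theorem stronglyRegular_lowerBand_lu (N r : ℕ) (hr : 0 < r) (hNr : r < N)
    (A : Matrix (Fin N) (Fin N) ℂ) (hsr : StronglyRegular N A)
    (hband : IsLowerBand N r A) :
    ∃ (L R : Matrix (Fin N) (Fin N) ℂ)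
      (f : ℕ → Matrix (Fin r) (Fin 1) ℂ) (Llast : Matrix (Fin r) (Fin r) ℂ),
      A = L * R ∧
      (∀ i j : Fin N, (i : ℕ) < (j : ℕ) → L i j = 0) ∧ (∀ i : Fin N, L i i = 1) ∧
      (∀ i j : Fin N, (j : ℕ) < (i : ℕ) → R i j = 0) ∧
      (∀ i j : Fin r, (i : ℕ) < (j : ℕ) → Llast i j = 0) ∧ (∀ i : Fin r, Llast i i = 1) ∧
      L⁻¹ = embedLast N r Llast * prodDesc N r (fun k => elemL r (f k)) := by
  classical
  set f : ℕ → Matrix (Fin r) (Fin 1) ℂ :=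
    fun k => LUAux.fOf N r (LUAux.Astep N r A (k - 1)) (k - 1) with hf
  set Llast : Matrix (Fin r) (Fin r) ℂ :=
    (((List.range' (N - r) (r - 1)).reverse).map
      (fun c => LUAux.WOf N r (LUAux.Astep N r A c) c)).prod with hLlast
  set M : Matrix (Fin N) (Fin N) ℂ :=
    embedLast N r Llast * prodDesc N r (fun k => elemL r (f k)) with hM
  have hdesc : prodDesc N r (fun k => elemL r (f k)) * A = LUAux.Astep N r A (N - r) :=
    LUAux.desc_prod_mul hr hNr A (N - r) le_rfl
  have hlast : embedLast N r Llast * LUAux.Astep N r A (N - r)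
      = LUAux.Astep N r A (N - 1) := by
    have h := LUAux.last_prod_mul hr hNr A (r - 1) le_rfl
    rw [show N - r + (r - 1) = N - 1 by omega] at h
    exact h
  have hMA : M * A = LUAux.Astep N r A (N - 1) := by
    rw [hM, mul_assoc, hdesc, hlast]
  have hULTdesc : LUAux.ULT (prodDesc N r (fun k => elemL r (f k))) := by
    refine LUAux.ULT.list_prod fun X hX => ?_
    simp only [List.mem_map] at hX
    obtain ⟨k, _, rfl⟩ := hX
    exact LUAux.embed_elemL_ult _
  have hULTLlast : LUAux.ULT Llast := by
    rw [hLlast]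
    refine LUAux.ULT.list_prod fun X hX => ?_
    simp only [List.mem_map] at hX
    obtain ⟨k, _, rfl⟩ := hX
    exact LUAux.WOf_ult _ _
  have hULTM : LUAux.ULT M := by
    rw [hM]
    exact LUAux.ULT.mul (LUAux.embedLast_ult hULTLlast) hULTdesc
  have hdetM : IsUnit M.det := by rw [hULTM.det_one]; exact isUnit_one
  have hinv : LUAux.ULT M⁻¹ := hULTM.inv
  obtain ⟨inv1, inv2, inv3⟩ := LUAux.invariants hr hNr A hsr hband (N - 1) le_rfl
  refine ⟨M⁻¹, LUAux.Astep N r A (N - 1), f, Llast, ?_, hinv.1, hinv.2, ?_,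
    hULTLlast.1, hULTLlast.2, ?_⟩
  · rw [← hMA, ← mul_assoc, Matrix.nonsing_inv_mul M hdetM, one_mul]
  · intro i j hji
    exact inv1 i j hji (by have := i.isLt; omega)
  · rw [Matrix.nonsing_inv_nonsing_inv M hdetM, hM]
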